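/- Let p be a prime, n a positive integer, R an F_p-algebra and λ ∈ R. The map sending T to (U-1)/λ-type substitution, namely the R-algebra homomorphism R[U]/(U^{p^n}-1) → R[T]/(T^{p^n}) given by U ↦ 1+λT, is a Hopf algebra homomorphism (where U is group-like and Δ(T) = T⊗1+1⊗T+λT⊗T); moreover, if λ is invertible in R, this map is an isomorphism of Hopf algebras. -/

import Mathlib

open Polynomial TensorProduct

set_option maxHeartbeats 1000000 in
/-- The map `U ↦ 1 + λT` gives a well-defined (unique) `R`-algebra homomorphism
`R[U]/(U^{p^n}-1) → R[T]/(T^{p^n})`; it is compatible with the Hopf structures: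
`U` is group-like and indeed `Δ(1+λT) = (1+λT) ⊗ (1+λT)` for the comultiplication
`Δ(T) = T⊗1 + 1⊗T + λT⊗T`; moreover if `λ` is invertible it is an isomorphism. -/
theorem stmt2 (p : ℕ) [Fact p.Prime] (n : ℕ) (hn : 0 < n)
    (R : Type*) [CommRing R] [CharP R p] (lam : R) :
    let AU := Polynomial R ⧸ Ideal.span {(X : Polynomial R) ^ (p ^ n) - 1}
    let AT := Polynomial R ⧸ Ideal.span {(X : Polynomial R) ^ (p ^ n)}
    let u : AU := Ideal.Quotient.mk _ X
    let t : AT := Ideal.Quotient.mk _ X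
    (∃! φ : AU →ₐ[R] AT, φ u = 1 + algebraMap R AT lam * t) ∧
    -- group-likeness of `1+λT` under `Δ(T) = T⊗1+1⊗T+λT⊗T`:
    ((1 : AT ⊗[R] AT) + lam • (t ⊗ₜ[R] 1 + 1 ⊗ₜ[R] t + lam • (t ⊗ₜ[R] t))
        = (1 + algebraMap R AT lam * t) ⊗ₜ[R] (1 + algebraMap R AT lam * t)) ∧
    (IsUnit lam → ∀ φ : AU →ₐ[R] AT, φ u = 1 + algebraMap R AT lam * t →
        Function.Bijective φ) := by
  intro AU AT u t
  set IU : Ideal (Polynomial R) := Ideal.span {(X : Polynomial R) ^ (p ^ n) - 1} with hIU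
  set IT : Ideal (Polynomial R) := Ideal.span {(X : Polynomial R) ^ (p ^ n)} with hIT
  have hXT : (Ideal.Quotient.mk IT) ((X : Polynomial R) ^ (p ^ n)) = 0 := by
    rw [Ideal.Quotient.eq_zero_iff_mem]; exact Ideal.subset_span rfl
  have hXU : (Ideal.Quotient.mk IU) ((X : Polynomial R) ^ (p ^ n) - 1) = 0 := by
    rw [Ideal.Quotient.eq_zero_iff_mem]; exact Ideal.subset_span rfl
  -- key polynomial identities
  have key1 : (1 + C lam * X : Polynomial R) ^ (p ^ n)
      = 1 + C (lam ^ (p ^ n)) * X ^ (p ^ n) := by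
    rw [add_pow_char_pow, one_pow, mul_pow, ← C_pow]
  -- the algebra hom
  let g : Polynomial R →ₐ[R] AT := aeval (1 + algebraMap R AT lam * t)
  have hgX : g X = 1 + algebraMap R AT lam * t := aeval_X _
  have hmk : (1 : AT) + algebraMap R AT lam * t
      = Ideal.Quotient.mk IT (1 + C lam * X) := by
    simp [t, Ideal.Quotient.mk_algebraMap]
    rfl
  have hg0 : ∀ a ∈ IU, g a = 0 := by
    intro a ha
    rw [hIU, Ideal.mem_span_singleton] at ha
    obtain ⟨b, rfl⟩ := ha
    rw [map_mul]
    have : g ((X : Polynomial R) ^ (p ^ n) - 1) = 0 := by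
      rw [map_sub, map_pow, map_one, hgX, hmk, ← map_pow, key1, map_add, map_one,
        map_mul, hXT, mul_zero, add_zero, sub_self]
    rw [this, zero_mul]
  let φ₀ : AU →ₐ[R] AT := Ideal.Quotient.liftₐ IU g hg0
  have hφ₀ : φ₀ u = 1 + algebraMap R AT lam * t := by
    show φ₀ (Ideal.Quotient.mk IU X) = _
    show g X = _
    exact hgX
  have uniq : ∀ φ : AU →ₐ[R] AT, φ u = 1 + algebraMap R AT lam * t → φ = φ₀ := by
    intro φ hφ
    apply Ideal.Quotient.algHom_ext
    apply Polynomial.algHom_ext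
    show φ u = φ₀ u
    rw [hφ, hφ₀]
  refine ⟨⟨φ₀, hφ₀, uniq⟩, ?_, ?_⟩
  · -- tensor identity
    have hct : algebraMap R AT lam * t = lam • t := (Algebra.smul_def lam t).symm
    rw [hct]
    rw [Algebra.TensorProduct.one_def]
    simp only [tmul_add, add_tmul, smul_tmul', tmul_smul, smul_add, smul_smul]
    abel_nf
  · -- bijectivity
    rintro hlam φ hφ
    obtain ⟨w, hw⟩ : ∃ w, w * lam = 1 := by
      obtain ⟨v, hv⟩ := hlam
      exact ⟨↑v⁻¹, by rw [← hv]; exact v.inv_mul⟩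
    rw [uniq φ hφ]
    -- build inverse
    have key2 : (C w * ((X : Polynomial R) - 1)) ^ (p ^ n)
        = C (w ^ (p ^ n)) * (X ^ (p ^ n) - 1) := by
      rw [mul_pow, ← C_pow, sub_pow_char_pow, one_pow]
    let h : Polynomial R →ₐ[R] AU := aeval (algebraMap R AU w * (u - 1))
    have hhX : h X = algebraMap R AU w * (u - 1) := aeval_X _
    have hmkU : algebraMap R AU w * (u - 1)
        = Ideal.Quotient.mk IU (C w * (X - 1)) := by
      simp [u, Ideal.Quotient.mk_algebraMap]
      rfl
    have hh0 : ∀ a ∈ IT, h a = 0 := by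
      intro a ha
      rw [hIT, Ideal.mem_span_singleton] at ha
      obtain ⟨b, rfl⟩ := ha
      rw [map_mul]
      have : h ((X : Polynomial R) ^ (p ^ n)) = 0 := by
        rw [map_pow, hhX, hmkU, ← map_pow, key2, map_mul, hXU, mul_zero]
      rw [this, zero_mul]
    let ψ : AT →ₐ[R] AU := Ideal.Quotient.liftₐ IT h hh0
    have hψ : ψ t = algebraMap R AU w * (u - 1) := by
      show ψ (Ideal.Quotient.mk IT X) = _
      show h X = _
      exact hhX
    have hl : ∀ x, ψ (φ₀ x) = x := by
      have : ψ.comp φ₀ = AlgHom.id R AU := by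
        apply Ideal.Quotient.algHom_ext
        apply Polynomial.algHom_ext
        show ψ (φ₀ u) = u
        rw [hφ₀, map_add, map_one, map_mul, AlgHom.commutes, hψ]
        rw [← mul_assoc, ← map_mul, mul_comm lam w, hw, map_one, one_mul]
        ring
      intro x
      exact DFunLike.congr_fun this x
    have hr : ∀ x, φ₀ (ψ x) = x := by
      have : φ₀.comp ψ = AlgHom.id R AT := by
        apply Ideal.Quotient.algHom_ext
        apply Polynomial.algHom_ext
        show φ₀ (ψ t) = t
        rw [hψ, map_mul, map_sub, map_one, AlgHom.commutes, hφ₀]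
        rw [add_sub_cancel_left, ← mul_assoc, ← map_mul, hw, map_one, one_mul]
      intro x
      exact DFunLike.congr_fun this x
    exact ⟨Function.LeftInverse.injective hl, Function.RightInverse.surjective hr⟩
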